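/- Let N be a normal operator on a Hilbert space, U a unitary commuting with N, and n ≥ 0. Then Uⁿ⁺¹ N* = N* Uⁿ⁺¹. More generally (Fuglede), if a bounded operator B commutes with a normal operator N, then B commutes with N*. -/

import Mathlib

open ContinuousLinearMap

open NormedSpace in
/-- Fuglede's theorem in a unital C*-algebra, via Rosenblum's proof. -/
lemma fuglede_cstar {A : Type*} [NormedRing A] [StarRing A] [CStarRing A] [NormOneClass A]
    [NormedAlgebra ℂ A] [StarModule ℂ A] [CompleteSpace A] (n b : A)
    (hn : star n * n = n * star n) (hb : b * n = n * b) :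
    b * star n = star n * b := by
  let +nondep : NormedAlgebra ℚ A := NormedAlgebra.restrictScalars ℚ ℂ A
  set a := star n with ha
  have hcomm : Commute n a := hn.symm
  have hbn : Commute b n := hb
  -- each `exp (z • a - conj z • n)` is unitary
  have skew : ∀ z : ℂ, star (z • a - (starRingEnd ℂ) z • n) = -(z • a - (starRingEnd ℂ) z • n) := by
    intro z
    simp [ha, star_smul, star_star, sub_eq_add_neg]
  have norm_exp : ∀ s : A, star s = -s → ‖exp s‖ = 1 := by
    intro s hs
    have h1 : star (exp s) * exp s = 1 := by
      rw [star_exp, hs, ← exp_add_of_commute (Commute.refl s).neg_left, neg_add_cancel,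
        exp_zero]
    have h2 : ‖exp s‖ * ‖exp s‖ = 1 := by
      rw [← CStarRing.norm_star_mul_self, h1, norm_one]
    nlinarith [norm_nonneg (exp s), norm_nonneg (exp s)]
  -- the entire function
  set F : ℂ → A := fun z => exp (z • a) * b * exp (-(z • a)) with hF
  have hFbound : ∀ z : ℂ, ‖F z‖ ≤ ‖b‖ := by
    intro z
    set s : A := z • a - (starRingEnd ℂ) z • n with hs
    set m : A := (starRingEnd ℂ) z • n with hm
    have hsm : Commute s m := by
      have : Commute (z • a) m := (hcomm.symm.smul_left z).smul_right _
      simpa [hs] using this.sub_left (Commute.refl m)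
    have hsplit : exp (z • a) = exp s * exp m := by
      rw [← exp_add_of_commute hsm, hs, sub_add_cancel]
    have hsplit' : exp (-(z • a)) = exp (-m) * exp (-s) := by
      rw [← exp_add_of_commute (hsm.symm.neg_left.neg_right), hs]
      congr 1
      abel
    have hbm : Commute b (exp m) := (hbn.smul_right _).exp_right
    have hmm : exp m * exp (-m) = 1 := by
      rw [← exp_add_of_commute (Commute.refl m).neg_right, add_neg_cancel, exp_zero]
    have hFz : F z = exp s * b * exp (-s) := by
      rw [hF]
      simp only
      rw [hsplit, hsplit']
      have : exp m * b = b * exp m := hbm.symm.eq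
      calc exp s * exp m * b * (exp (-m) * exp (-s))
          = exp s * (exp m * b * (exp (-m) * exp (-s))) := by
            simp only [mul_assoc]
        _ = exp s * (b * (exp m * exp (-m)) * exp (-s)) := by
            rw [this]; simp only [mul_assoc]
        _ = exp s * (b * exp (-s)) := by rw [hmm, mul_one]
        _ = exp s * b * exp (-s) := by rw [mul_assoc]
    have hns : ‖exp s‖ = 1 := norm_exp s (skew z)
    have hns' : ‖exp (-s)‖ = 1 := by
      refine norm_exp (-s) ?_
      rw [star_neg, skew z, neg_neg]
    calc ‖F z‖ = ‖exp s * b * exp (-s)‖ := by rw [hFz]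
      _ ≤ ‖exp s * b‖ * ‖exp (-s)‖ := norm_mul_le _ _
      _ ≤ ‖exp s‖ * ‖b‖ * ‖exp (-s)‖ := by
          gcongr; exacts [norm_mul_le _ _]
      _ = ‖b‖ := by rw [hns, hns', one_mul, mul_one]
  have hdiff1 : Differentiable ℂ fun z : ℂ => exp (z • a) :=
    fun z => (hasDerivAt_exp_smul_const a z).differentiableAt
  have hdiff2 : Differentiable ℂ fun z : ℂ => exp (-(z • a)) := by
    have : (fun z : ℂ => exp (-(z • a))) = (fun z : ℂ => exp (z • a)) ∘ (fun z => -z) := by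
      funext z; simp
    rw [this]
    exact hdiff1.comp differentiable_neg
  have hFdiff : Differentiable ℂ F := (hdiff1.mul (differentiable_const b)).mul hdiff2
  have hFrange : Bornology.IsBounded (Set.range F) := by
    refine (Metric.isBounded_iff_subset_closedBall 0).2 ⟨‖b‖, ?_⟩
    rintro - ⟨z, rfl⟩
    simpa using hFbound z
  -- Liouville: F is constant
  have hFconst : ∀ z : ℂ, F z = b := by
    intro z
    have := hFdiff.apply_eq_apply_of_bounded hFrange z 0
    simpa [hF] using this
  -- hence exp (z • a) commutes with b
  have key : ∀ z : ℂ, exp (z • a) * b = b * exp (z • a) := by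
    intro z
    have h1 : exp (-(z • a)) * exp (z • a) = 1 := by
      rw [← exp_add_of_commute (Commute.refl (z • a)).neg_left, neg_add_cancel, exp_zero]
    have := congrArg (· * exp (z • a)) (hFconst z)
    simpa [hF, mul_assoc, h1] using this
  -- differentiate at 0
  have h1 : HasDerivAt (fun z : ℂ => exp (z • a) * b) (a * b) 0 := by
    have := (hasDerivAt_exp_smul_const a (0 : ℂ)).mul_const b
    simpa using this
  have h2 : HasDerivAt (fun z : ℂ => exp (z • a) * b) (b * a) 0 := by
    have := (hasDerivAt_exp_smul_const a (0 : ℂ)).const_mul b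
    have heq : (fun z : ℂ => b * exp (z • a)) = fun z : ℂ => exp (z • a) * b := by
      funext z; exact (key z).symm
    rw [heq] at this
    simpa using this
  exact h2.unique h1

/-- Let `N` be a normal operator on a complex Hilbert space and `U` a unitary commuting
with `N`.  Then `Uⁿ⁺¹ N* = N* Uⁿ⁺¹` for every `n ≥ 0`.  More generally (Fuglede), every
bounded operator `B` commuting with `N` also commutes with `N*`. -/
theorem fuglede {H : Type*} [NormedAddCommGroup H] [InnerProductSpace ℂ H]
    [CompleteSpace H] (N U B : H →L[ℂ] H)
    (hN : adjoint N * N = N * adjoint N)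
    (hU₁ : adjoint U * U = 1) (hU₂ : U * adjoint U = 1)
    (hUN : U * N = N * U) (hBN : B * N = N * B) :
    (∀ n : ℕ, U ^ (n + 1) * adjoint N = adjoint N * U ^ (n + 1)) ∧
      B * adjoint N = adjoint N * B := by
  rcases subsingleton_or_nontrivial H with hH | hH
  · exact ⟨fun _ => Subsingleton.elim _ _, Subsingleton.elim _ _⟩
  have key : ∀ C : H →L[ℂ] H, C * N = N * C → C * adjoint N = adjoint N * C := by
    intro C hC
    have hN' : star N * N = N * star N := by
      simpa [ContinuousLinearMap.star_eq_adjoint] using hN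
    have := fuglede_cstar N C hN' hC
    simpa [ContinuousLinearMap.star_eq_adjoint] using this
  refine ⟨fun n => ?_, key B hBN⟩
  have : Commute U N := hUN
  exact key _ (this.pow_left (n + 1))
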